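/- Nonnegativity of redistributions in NRM: for every executed step j of NRM in trees and every q ∈ X_j, S_{−q} ≥ 0 and hence R_q = (n_q/n_{X_j})·S_{−q} ≥ 0. In particular, when a'_{j−1} = a_{j−1}, one has V_{a'_j} ∪ V_q ⊆ V_{a_{j−1}} and therefore v^{(1)}_{V∖(V_{a'_j}∪V_q)} ≥ v^{(1)}_{V∖V_{a_{j−1}}} = p^{auc}_{a_{j−1}}. -/
import Mathlib


open Finset

attribute [local instance] Classical.propDecidable

noncomputable section

/-- A tree network rooted at a resource owner `o`: the agents are the elements of
the finite type `α`, and `parent i = none` means that the parent of agent `i` is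
the owner `o` herself.  The field `depth` records the distance to the owner and
witnesses that the parent relation is well-founded. -/
structure TreeNet (α : Type) [Fintype α] [DecidableEq α] where
  parent : α → Option α
  depth : α → ℕ
  depth_root : ∀ i, parent i = none → depth i = 0
  depth_child : ∀ i j, parent i = some j → depth i = depth j + 1

namespace TreeNet

variable {α : Type} [Fintype α] [DecidableEq α]

/-- `j` is a strict ancestor of `i`: iterating `parent` from `i` reaches `j`. -/
def StrictAnc (T : TreeNet α) (j i : α) : Prop :=
  ∃ m : ℕ, 0 < m ∧ (fun x : Option α => x.bind T.parent)^[m] (some i) = some j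

/-- the subtree `V_i` of agent `i` inside the participant set `V`:
`i` together with all its descendants. -/
def sub (T : TreeNet α) (V : Finset α) (i : α) : Finset α :=
  V.filter fun x => x = i ∨ T.StrictAnc i x

/-- `n_i`, the number of agents in the subtree of `i`. -/
def nsub (T : TreeNet α) (V : Finset α) (i : α) : ℕ := (T.sub V i).card

/-- `v^{(1)}_D`: the highest reported valuation in `D` (with the convention `0`
for `D = ∅`). -/
def vmax (val : α → ℝ) (D : Finset α) : ℝ :=
  if h : D.Nonempty then D.sup' h val else 0

/-- the list of strict ancestors of `i`, ordered by increasing depth. -/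
def ancList (T : TreeNet α) (i : α) : List α :=
  match h : T.parent i with
  | none => []
  | some j => T.ancList j ++ [j]
termination_by T.depth i
decreasing_by
  have := T.depth_child i j h
  omega

/-- the full sequence `a_1, …, a_{k+1}`: the strict ancestors of the highest
bidder `hb` ordered by increasing depth, followed by `hb` itself. -/
def seq (T : TreeNet α) (hb : α) : List α := T.ancList hb ++ [hb]

/-- `a_j`, as an `Option α`: `none` for `j = 0` (the owner `o`) and out of range. -/
def aIdx (T : TreeNet α) (hb : α) (j : ℕ) : Option α :=
  if j = 0 then none else (T.seq hb)[j - 1]?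

/-- the required payment `p^{auc}_{a_j} = v^{(1)}_{V ∖ V_{a_j}}` (and `0` for `j = 0`). -/
def pauc (T : TreeNet α) (V : Finset α) (val : α → ℝ) (hb : α) (j : ℕ) : ℝ :=
  match T.aIdx hb j with
  | none => 0
  | some i => vmax val (V \ T.sub V i)

/-- the children inside `V` of a vertex (`none` denotes the owner `o`). -/
def childrenOf (T : TreeNet α) (V : Finset α) (x : Option α) : Finset α :=
  V.filter fun y => T.parent y = x

/-- `X_j`: the set of children of `a_{j-1}`. -/
def X (T : TreeNet α) (V : Finset α) (hb : α) (j : ℕ) : Finset α :=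
  T.childrenOf V (T.aIdx hb (j - 1))

/-- `n_{X_j} = Σ_{q ∈ X_j} n_q`. -/
def nX (T : TreeNet α) (V : Finset α) (hb : α) (j : ℕ) : ℕ :=
  ∑ q ∈ T.X V hb j, T.nsub V q

/-- subtree of an optional vertex, with the convention `∅` for `none`. -/
def subO (T : TreeNet α) (V : Finset α) : Option α → Finset α
  | none => ∅
  | some i => T.sub V i

/-- subtree of an optional vertex, with the convention `V` for the owner `o`. -/
def subUp (T : TreeNet α) (V : Finset α) : Option α → Finset α
  | none => V
  | some i => T.sub V i

/-- `S_{-q}` at step `j`, where `sel` selects a highest bidder in a given set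
(`h' = sel (V ∖ V_q)` is a highest bidder without `q`'s participation). -/
def Sneg (T : TreeNet α) (V : Finset α) (val : α → ℝ) (sel : Finset α → Option α)
    (hb : α) (j : ℕ) (q : α) : ℝ :=
  match sel (V \ T.sub V q) with
  | none => 0
  | some h' =>
      if T.aIdx h' (j - 1) = T.aIdx hb (j - 1) then
        vmax val (V \ (T.subO V (T.aIdx h' j) ∪ T.sub V q)) - T.pauc V val hb (j - 1)
      else 0

/-- the money `R_q = (n_q / n_{X_j}) ⬝ S_{-q}` redistributed to `q` in step `j`. -/
def R (T : TreeNet α) (V : Finset α) (val : α → ℝ) (sel : Finset α → Option α)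
    (hb : α) (j : ℕ) (q : α) : ℝ :=
  (T.nsub V q : ℝ) / (T.nX V hb j : ℝ) * T.Sneg V val sel hb j q

/-- the allocation condition `v̂_{a_j} ≥ p^{auc}_{a_j}` holds at step `j`. -/
def Stops (T : TreeNet α) (V : Finset α) (val : α → ℝ) (hb : α) (j : ℕ) : Prop :=
  ∃ i, T.aIdx hb j = some i ∧ T.pauc V val hb j ≤ val i

/-- the step `J` at which the procedure stops. -/
def stepJ (T : TreeNet α) (V : Finset α) (val : α → ℝ) (hb : α) : ℕ :=
  sInf {j | 1 ≤ j ∧ T.Stops V val hb j}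

/-- the winner of the item. -/
def winner (T : TreeNet α) (V : Finset α) (val : α → ℝ) (hb : α) : Option α :=
  T.aIdx hb (T.stepJ V val hb)

/-- the (first) step at which agent `i` is assigned a payment. -/
def stepOf (T : TreeNet α) (V : Finset α) (val : α → ℝ) (hb : α) (i : α) : ℕ :=
  sInf {j | 1 ≤ j ∧ j ≤ T.stepJ V val hb ∧ i ∈ T.X V hb j}

/-- the payment of agent `i` under NRM: the winner pays `p^{auc}_{a_J} - R_{a_J}`,
every other agent considered in some executed step `j` pays `-R_q`, and every
agent not assigned a payment pays `0`. -/
def pay (T : TreeNet α) (V : Finset α) (val : α → ℝ) (sel : Finset α → Option α)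
    (hb : α) (i : α) : ℝ :=
  if T.winner V val hb = some i then
    T.pauc V val hb (T.stepJ V val hb) - T.R V val sel hb (T.stepJ V val hb) i
  else if ∃ j, 1 ≤ j ∧ j ≤ T.stepJ V val hb ∧ i ∈ T.X V hb j then
    -T.R V val sel hb (T.stepOf V val hb i) i
  else 0

/-- the surplus `S = Σ_{i ∈ V} p_i` of the mechanism. -/
def surplus (T : TreeNet α) (V : Finset α) (val : α → ℝ) (sel : Finset α → Option α)
    (hb : α) : ℝ :=
  ∑ i ∈ V, T.pay V val sel hb i

/-- the utility of agent `i` whose true valuation is `tv`: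
`tv` if she wins, minus her payment. -/
def util (T : TreeNet α) (V : Finset α) (val : α → ℝ) (sel : Finset α → Option α)
    (hb : α) (tv : ℝ) (i : α) : ℝ :=
  (if T.winner V val hb = some i then tv else 0) - T.pay V val sel hb i

/-- the participant set `V` is closed under taking parents
(as is every set generated by invitation chains). -/
def Closed (T : TreeNet α) (V : Finset α) : Prop :=
  ∀ i ∈ V, ∀ j, T.parent i = some j → j ∈ V

/-- `hb` is a highest bidder of `V`. -/
def IsTop (V : Finset α) (val : α → ℝ) (hb : α) : Prop :=
  hb ∈ V ∧ ∀ i ∈ V, val i ≤ val hb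

/-- `sel` selects a highest bidder of every nonempty finite set of agents. -/
def SelValid (val : α → ℝ) (sel : Finset α → Option α) : Prop :=
  ∀ D : Finset α, (D.Nonempty → ∃ b, sel D = some b) ∧
    ∀ b, sel D = some b → b ∈ D ∧ ∀ x ∈ D, val x ≤ val b

/-- the true neighbour set of agent `i` that she may invite: her children. -/
def childrenAll (T : TreeNet α) (i : α) : Finset α :=
  Finset.univ.filter fun y => T.parent y = some i

/-- agent `i` is reached from the owner by the chains of invitations `inv`
(the owner informs all her neighbours, i.e. the agents with `parent = none`). -/
def Reached (T : TreeNet α) (inv : α → Finset α) (i : α) : Prop :=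
  match h : T.parent i with
  | none => True
  | some j => T.Reached inv j ∧ i ∈ inv j
termination_by T.depth i
decreasing_by
  have := T.depth_child i j h
  omega

/-- the participant set generated by the invitations `inv`. -/
def Vgen (T : TreeNet α) (inv : α → Finset α) : Finset α :=
  Finset.univ.filter fun i => T.Reached inv i

end TreeNet

namespace TreeNet
variable {α : Type} [Fintype α] [DecidableEq α] (T : TreeNet α)

lemma strictAnc_of_parent {a q : α} (h : T.parent q = some a) : T.StrictAnc a q :=
  ⟨1, one_pos, by simp [h]⟩

lemma strictAnc_trans {a q x : α} (h1 : T.StrictAnc a q) (h2 : T.StrictAnc q x) :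
    T.StrictAnc a x := by
  obtain ⟨m1, hm1, e1⟩ := h1
  obtain ⟨m2, hm2, e2⟩ := h2
  exact ⟨m1 + m2, by omega, by rw [Function.iterate_add_apply, e2, e1]⟩

lemma sub_subset_of_parent {V : Finset α} {a q : α} (h : T.parent q = some a) :
    T.sub V q ⊆ T.sub V a := by
  intro x hx
  simp only [sub, mem_filter] at hx ⊢
  refine ⟨hx.1, ?_⟩
  rcases hx.2 with rfl | hs
  · exact Or.inr (T.strictAnc_of_parent h)
  · exact Or.inr (T.strictAnc_trans (T.strictAnc_of_parent h) hs)

lemma sub_subset_V {V : Finset α} {q : α} : T.sub V q ⊆ V := filter_subset _ _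

lemma seq_eq_none {i : α} (h : T.parent i = none) : T.seq i = [i] := by
  unfold seq
  rw [ancList]
  split <;> simp_all

lemma seq_eq_some {i p : α} (h : T.parent i = some p) : T.seq i = T.seq p ++ [i] := by
  unfold seq
  rw [ancList]
  split <;> simp_all [seq]

lemma seq_getLast (i : α) : (T.seq i)[(T.seq i).length - 1]? = some i := by
  unfold seq
  simp

lemma seq_parent_aux : ∀ n i, T.depth i ≤ n → ∀ m b,
    (T.seq i)[m+1]? = some b → T.parent b = (T.seq i)[m]? := by
  intro n
  induction n with
  | zero =>
    intro i hi m b hb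
    cases h : T.parent i with
    | none => rw [T.seq_eq_none h] at hb; simp at hb
    | some p => have := T.depth_child i p h; omega
  | succ n ih =>
    intro i hi m b hb
    cases h : T.parent i with
    | none => rw [T.seq_eq_none h] at hb; simp at hb
    | some p =>
      have hdp : T.depth p ≤ n := by have := T.depth_child i p h; omega
      rw [T.seq_eq_some h] at hb ⊢
      rcases lt_trichotomy (m+1) (T.seq p).length with hlt | heq | hgt
      · rw [List.getElem?_append_left hlt] at hb
        rw [List.getElem?_append_left (by omega)]
        exact ih p hdp m b hb
      · have hb' : b = i := by
          rw [List.getElem?_append_right (le_of_eq heq.symm)] at hb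
          simp [heq] at hb
          exact hb.symm
        subst hb'
        rw [List.getElem?_append_left (by omega)]
        rw [h, ← T.seq_getLast p]
        congr 1
        omega
      · rw [List.getElem?_append_right (by omega), show m+1-(T.seq p).length = (m - (T.seq p).length) + 1 from by omega] at hb
        simp at hb

lemma seq_parent {i b : α} {m : ℕ} (hb : (T.seq i)[m+1]? = some b) :
    T.parent b = (T.seq i)[m]? :=
  T.seq_parent_aux (T.depth i) i le_rfl m b hb

lemma vmax_nonneg {V D : Finset α} {val : α → ℝ} (hval : ∀ i ∈ V, 0 ≤ val i)
    (hD : D ⊆ V) : 0 ≤ vmax val D := by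
  unfold vmax
  split_ifs with h
  · obtain ⟨x, hx⟩ := h
    exact le_trans (hval x (hD hx)) (Finset.le_sup' val hx)
  · exact le_refl 0

lemma vmax_mono {V D E : Finset α} {val : α → ℝ} (hval : ∀ i ∈ V, 0 ≤ val i)
    (hDE : D ⊆ E) (hE : E ⊆ V) : vmax val D ≤ vmax val E := by
  unfold vmax
  split_ifs with h1 h2
  · exact Finset.sup'_le _ _ fun x hx => Finset.le_sup' val (hDE hx)
  · exact absurd (h1.mono hDE) h2
  · obtain ⟨x, hx⟩ := ‹E.Nonempty›
    exact le_trans (hval x (hE hx)) (Finset.le_sup' val hx)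
  · exact le_refl 0

end TreeNet

theorem TreeNet.nrm_tree_redistribution_nonneg
    {α : Type} [Fintype α] [DecidableEq α] (T : TreeNet α)
    (V : Finset α) (hV : T.Closed V)
    (val : α → ℝ) (hval : ∀ i ∈ V, 0 ≤ val i)
    (sel : Finset α → Option α) (hsel : TreeNet.SelValid val sel)
    (hb : α) (hhb : TreeNet.IsTop V val hb)
    (j : ℕ) (hj1 : 1 ≤ j) (hj2 : j ≤ T.stepJ V val hb) :   -- an executed step
    (∀ q ∈ T.X V hb j,
        0 ≤ T.Sneg V val sel hb j q ∧ 0 ≤ T.R V val sel hb j q) ∧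
    (∀ q ∈ T.X V hb j, ∀ h', sel (V \ T.sub V q) = some h' →
        T.aIdx h' (j - 1) = T.aIdx hb (j - 1) →
        T.subO V (T.aIdx h' j) ∪ T.sub V q ⊆ T.subUp V (T.aIdx hb (j - 1)) ∧
        TreeNet.vmax val (V \ T.subUp V (T.aIdx hb (j - 1))) = T.pauc V val hb (j - 1) ∧
        T.pauc V val hb (j - 1) ≤
          TreeNet.vmax val (V \ (T.subO V (T.aIdx h' j) ∪ T.sub V q))) := by
  have key : ∀ q ∈ T.X V hb j, ∀ h', sel (V \ T.sub V q) = some h' →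
      T.aIdx h' (j - 1) = T.aIdx hb (j - 1) →
      T.subO V (T.aIdx h' j) ∪ T.sub V q ⊆ T.subUp V (T.aIdx hb (j - 1)) ∧
      TreeNet.vmax val (V \ T.subUp V (T.aIdx hb (j - 1))) = T.pauc V val hb (j - 1) ∧
      T.pauc V val hb (j - 1) ≤
        TreeNet.vmax val (V \ (T.subO V (T.aIdx h' j) ∪ T.sub V q)) := by
    intro q hq h' hsel' hcond
    have hq' : T.parent q = T.aIdx hb (j - 1) := by
      simp only [X, childrenOf, mem_filter] at hq
      exact hq.2
    have hsubq : T.sub V q ⊆ T.subUp V (T.aIdx hb (j - 1)) := by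
      cases ha : T.aIdx hb (j - 1) with
      | none => exact T.sub_subset_V
      | some a =>
        show T.sub V q ⊆ T.sub V a
        exact T.sub_subset_of_parent (ha ▸ hq')
    have hsubh : T.subO V (T.aIdx h' j) ∪ T.sub V q ⊆ T.subUp V (T.aIdx hb (j - 1)) := by
      apply Finset.union_subset _ hsubq
      cases hb' : T.aIdx h' j with
      | none => simp [subO]
      | some b =>
        cases ha : T.aIdx hb (j - 1) with
        | none =>
          show T.sub V b ⊆ V
          exact T.sub_subset_V
        | some a =>
          have hj2' : 2 ≤ j := by
            by_contra hc
            have hj1' : j = 1 := by omega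
            subst hj1'
            simp [aIdx] at ha
          have h1 : T.aIdx h' j = (T.seq h')[(j - 2) + 1]? := by
            simp only [aIdx, if_neg (by omega : ¬ j = 0)]
            congr 1
            omega
          have h2 : T.aIdx h' (j - 1) = (T.seq h')[j - 2]? := by
            simp only [aIdx, if_neg (by omega : ¬ j - 1 = 0)]
            congr 1
          have hpar : T.parent b = T.aIdx h' (j - 1) := by
            rw [h2]
            exact T.seq_parent (h1 ▸ hb')
          rw [hcond, ha] at hpar
          show T.sub V b ⊆ T.sub V a
          exact T.sub_subset_of_parent hpar
    have heqp : TreeNet.vmax val (V \ T.subUp V (T.aIdx hb (j - 1)))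
        = T.pauc V val hb (j - 1) := by
      cases ha : T.aIdx hb (j - 1) with
      | none => simp [pauc, ha, subUp, vmax]
      | some a => simp [pauc, ha, subUp]
    refine ⟨hsubh, heqp, ?_⟩
    rw [← heqp]
    exact TreeNet.vmax_mono hval (Finset.sdiff_subset_sdiff Finset.Subset.rfl hsubh)
      Finset.sdiff_subset
  refine ⟨?_, key⟩
  intro q hq
  have hS : 0 ≤ T.Sneg V val sel hb j q := by
    unfold Sneg
    cases hsel' : sel (V \ T.sub V q) with
    | none => exact le_refl 0
    | some h' =>
      simp only
      split_ifs with hcond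
      · obtain ⟨_, heq, hle⟩ := key q hq h' hsel' hcond
        linarith
      · exact le_refl 0
  exact ⟨hS, mul_nonneg (by positivity) hS⟩
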